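/- arXiv:1311.2330 — 2 statements merged into one kernel-verified Lean document; each statement's English description precedes it below -/
import Mathlib

section
/- Let α and κ be infinite cardinals, and let {X_i : i ∈ I} be a set of topological spaces such that |I| = α, and for each i ∈ I, 2 ⊆_h X_i and w(X_i) ≤ α. Then: (a) if κ ≤ α⁺ then w((X_I)_κ) = α^{<κ}; and (b) if κ ≥ α⁺ then w((X_I)_κ) = 2^α. -/
open Cardinal TopologicalSpace Set Ordinal

universe u

/-- The `κ`-box topology on a product of topological spaces: generated by the boxes
`Π i, U i` with each `U i` open and fewer than `κ` coordinates restricted. -/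
def boxTopology (κ : Cardinal.{u}) {ι : Type u} (X : ι → Type u)
    [∀ i, TopologicalSpace (X i)] : TopologicalSpace (∀ i, X i) :=
  TopologicalSpace.generateFrom
    {S | ∃ U : ∀ i, Set (X i), (∀ i, IsOpen (U i)) ∧
      #{i | U i ≠ Set.univ} < κ ∧ S = Set.pi Set.univ U}

/-- The weight of a topological space: the least cardinality of a topological base
(finite values allowed). -/
noncomputable def wt (X : Type u) [TopologicalSpace X] : Cardinal.{u} :=
  sInf {c | ∃ B : Set (Set X), IsTopologicalBasis B ∧ #B = c}

/-- `Y ⊆ₕ X`: `X` contains a homeomorphic copy of `Y`. -/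
def ContainsHomeoCopy (Y X : Type u) [TopologicalSpace Y] [TopologicalSpace X] : Prop :=
  ∃ f : Y → X, Topology.IsEmbedding f



lemma wt_le_basis {X : Type u} [TopologicalSpace X] {B : Set (Set X)}
    (hB : IsTopologicalBasis B) : wt X ≤ #B :=
  csInf_le (OrderBot.bddBelow _) ⟨B, hB, rfl⟩

lemma le_wt {X : Type u} [TopologicalSpace X] {c : Cardinal.{u}}
    (h : ∀ B : Set (Set X), IsTopologicalBasis B → c ≤ #B) : c ≤ wt X := by
  have hne : {c | ∃ B : Set (Set X), IsTopologicalBasis B ∧ #B = c}.Nonempty :=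
    ⟨_, {U : Set X | IsOpen U}, isTopologicalBasis_opens, rfl⟩
  refine le_csInf hne ?_
  rintro d ⟨B, hB, rfl⟩
  exact h B hB

lemma exists_wt_basis (X : Type u) [TopologicalSpace X] :
    ∃ B : Set (Set X), IsTopologicalBasis B ∧ #B = wt X :=
  csInf_mem (s := {c | ∃ B : Set (Set X), IsTopologicalBasis B ∧ #B = c})
    ⟨_, {U : Set X | IsOpen U}, isTopologicalBasis_opens, rfl⟩

lemma aleph0_le_powerlt {α κ : Cardinal.{u}} (hα : ℵ₀ ≤ α) (hκ : ℵ₀ ≤ κ) : ℵ₀ ≤ α ^< κ := by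
  have h1 : (1 : Cardinal) < κ := lt_of_lt_of_le one_lt_aleph0 hκ
  calc ℵ₀ ≤ α := hα
  _ = α ^ (1 : Cardinal) := (power_one α).symm
  _ ≤ α ^< κ := le_powerlt α h1

lemma le_powerlt_self {α κ : Cardinal.{u}} (hα : ℵ₀ ≤ α) : κ ≤ α ^< κ := by
  by_contra hc
  push_neg at hc
  have h2 : (2 : Cardinal) ≤ α := le_trans (by exact_mod_cast (nat_lt_aleph0 2).le) hα
  exact lt_irrefl _ ((cantor (α ^< κ)).trans_le ((power_le_power_right h2).trans (le_powerlt α hc)))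

lemma card_small_subsets_le_aux {γ β : Type u} {α κ : Cardinal.{u}} (r : β → β → Prop)
    [IsWellOrder β r] (hα : ℵ₀ ≤ α) (hκ : ℵ₀ ≤ κ) (hγ : #γ ≤ α)
    (htype : Ordinal.type r = κ.ord) :
    #{E : Set γ | #E < κ} ≤ α ^< κ := by
  classical
  have hβ : #β = κ := by
    rw [← Ordinal.card_type r, htype, card_ord]
  have hexists : ∀ E : ↥{E : Set γ | #E < κ},
      ∃ p : Σ x : β, ({y : β // r y x} → γ), Set.range p.2 = E.1 := by
    rintro ⟨E, hE⟩
    simp only [mem_setOf_eq] at hE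
    have hlt : (#E).ord < Ordinal.type r := by
      rw [htype]; exact Cardinal.ord_lt_ord.2 hE
    have hcard : #{y : β // r y (Ordinal.enum r ⟨(#E).ord, hlt⟩)} = #E := by
      rw [← Ordinal.card_typein, Ordinal.typein_enum, card_ord]
    obtain ⟨e⟩ := Cardinal.eq.mp hcard
    refine ⟨⟨Ordinal.enum r ⟨(#E).ord, hlt⟩, fun y => (e y : γ)⟩, ?_⟩
    ext z
    constructor
    · rintro ⟨y, rfl⟩
      exact (e y).2
    · intro hz
      exact ⟨e.symm ⟨z, hz⟩, by simp⟩
  choose p hp using hexists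
  have hinj : Function.Injective p := by
    intro E E' h
    apply Subtype.ext
    rw [← hp E, ← hp E', h]
  have hterm : ∀ x : β, #({y : β // r y x} → γ) ≤ α ^< κ := by
    intro x
    have hxκ : #{y : β // r y x} < κ := by
      rw [← Ordinal.card_typein]
      exact Cardinal.lt_ord.mp (htype ▸ Ordinal.typein_lt_type r x)
    calc #({y : β // r y x} → γ) = #γ ^ #{y : β // r y x} := (power_def γ _).symm
    _ ≤ α ^ #{y : β // r y x} := power_le_power_right hγ
    _ ≤ α ^< κ := le_powerlt α hxκ
  calc #↥{E : Set γ | #E < κ} ≤ #(Σ x : β, ({y : β // r y x} → γ)) := mk_le_of_injective hinj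
  _ = Cardinal.sum (fun x : β => #({y : β // r y x} → γ)) := mk_sigma _
  _ ≤ Cardinal.sum (fun _ : β => α ^< κ) := sum_le_sum _ _ hterm
  _ = #β * (α ^< κ) := sum_const' _ _
  _ = κ * (α ^< κ) := by rw [hβ]
  _ ≤ (α ^< κ) * (α ^< κ) := by gcongr; exact le_powerlt_self hα
  _ = α ^< κ := mul_eq_self (aleph0_le_powerlt hα hκ)

set_option linter.deprecated false in
lemma card_small_subsets_le {γ : Type u} {α κ : Cardinal.{u}} (hα : ℵ₀ ≤ α) (hκ : ℵ₀ ≤ κ)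
    (hγ : #γ ≤ α) : #{E : Set γ | #E < κ} ≤ α ^< κ := by
  haveI := (Quotient.out κ.ord).wo
  exact card_small_subsets_le_aux (Quotient.out κ.ord).r hα hκ hγ (Quotient.out_eq κ.ord)

lemma powerlt_le_card_small_subsets {ι : Type u} {α κ : Cardinal.{u}} (hα : ℵ₀ ≤ α)
    (hκ : ℵ₀ ≤ κ) (hι : #ι = α) (hκα : κ ≤ Order.succ α) :
    α ^< κ ≤ #{E : Set ι | #E < κ} := by
  rw [powerlt_le]
  intro lam hlam
  rcases eq_or_ne lam 0 with rfl | hne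
  · rw [power_zero, Cardinal.one_le_iff_ne_zero]
    refine mk_ne_zero_iff.mpr ⟨⟨∅, ?_⟩⟩
    simp only [mem_setOf_eq, mk_emptyCollection]
    exact aleph0_pos.trans_le hκ
  · have hlamα : lam ≤ α := Order.lt_succ_iff.mp (hlam.trans_le hκα)
    have hδ : #(Quotient.out lam) = lam := mk_out lam
    have hprod : #(Quotient.out lam × ι) = #ι := by
      rw [mk_prod, Cardinal.lift_id, Cardinal.lift_id, hδ, hι, mul_eq_right hα hlamα hne]
    obtain ⟨e⟩ := Cardinal.eq.mp hprod
    have hFcard : ∀ f : Quotient.out lam → ι,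
        #(e '' (Set.range fun x => (x, f x)) : Set ι) < κ := fun f => by
      rw [mk_image_eq e.injective]
      exact (mk_range_le).trans_lt (by rw [hδ]; exact hlam)
    have hFinj : Function.Injective
        (fun f : Quotient.out lam → ι => e '' (Set.range fun x => (x, f x))) := by
      intro f g h
      have h2 : (Set.range fun x => (x, f x)) = Set.range fun x => (x, g x) :=
        (Set.image_injective.mpr e.injective) h
      funext x
      have hmem : (x, f x) ∈ Set.range fun y => (y, g y) := h2 ▸ Set.mem_range_self x
      obtain ⟨y, hy⟩ := hmem
      have h4 : y = x := congrArg Prod.fst hy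
      subst h4
      exact (congrArg Prod.snd hy).symm
    calc α ^ lam = #(Quotient.out lam → ι) := by rw [← power_def, hδ, hι]
    _ ≤ #↥{E : Set ι | #E < κ} := mk_le_of_injective
        (f := fun f => (⟨_, hFcard f⟩ : ↥{E : Set ι | #E < κ}))
        (fun f g h => hFinj (congrArg Subtype.val h))


def boxGen (κ : Cardinal.{u}) {ι : Type u} (X : ι → Type u)
    [∀ i, TopologicalSpace (X i)] : Set (Set (∀ i, X i)) :=
  {S | ∃ U : ∀ i, Set (X i), (∀ i, IsOpen (U i)) ∧
    #{i | U i ≠ Set.univ} < κ ∧ S = Set.pi Set.univ U}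

lemma boxGen_isBasis (κ : Cardinal.{u}) {ι : Type u} (X : ι → Type u)
    [∀ i, TopologicalSpace (X i)] (hκ : ℵ₀ ≤ κ) :
    @IsTopologicalBasis (∀ i, X i) (boxTopology κ X) (boxGen κ X) := by
  letI := boxTopology κ X
  have hκ0 : (0 : Cardinal) < κ := aleph0_pos.trans_le hκ
  refine ⟨?_, ?_, rfl⟩
  · rintro t₁ ⟨U, hU, hUc, rfl⟩ t₂ ⟨V, hV, hVc, rfl⟩ x hx
    refine ⟨Set.pi Set.univ (fun i => U i ∩ V i),
      ⟨fun i => U i ∩ V i, fun i => (hU i).inter (hV i), ?_, rfl⟩, ?_, ?_⟩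
    · refine lt_of_le_of_lt (mk_le_mk_of_subset (fun i hi => ?_))
        ((mk_union_le _ _).trans_lt (add_lt_of_lt hκ hUc hVc))
      by_contra hc
      simp only [mem_union, mem_setOf_eq, not_or, not_not] at hc
      exact hi (show U i ∩ V i = Set.univ by rw [hc.1, hc.2, univ_inter])
    · exact fun i _ => ⟨hx.1 i (mem_univ i), hx.2 i (mem_univ i)⟩
    · exact subset_of_eq pi_inter_distrib
  · rw [sUnion_eq_univ_iff]
    intro x
    refine ⟨Set.univ, ⟨fun _ => Set.univ, fun _ => isOpen_univ, ?_, (Set.pi_univ Set.univ).symm⟩,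
      mem_univ x⟩
    simpa using hκ0
theorem stmt4 (α κ : Cardinal.{u}) (hα : ℵ₀ ≤ α) (hκ : ℵ₀ ≤ κ)
    {ι : Type u} (X : ι → Type u) [∀ i, TopologicalSpace (X i)]
    (hI : #ι = α) (h2 : ∀ i, ContainsHomeoCopy (ULift.{u} Bool) (X i))
    (hw : ∀ i, wt (X i) ≤ α) :
    (κ ≤ Order.succ α → @wt (∀ i, X i) (boxTopology κ X) = α ^< κ) ∧
    (Order.succ α ≤ κ → @wt (∀ i, X i) (boxTopology κ X) = 2 ^ α) := by
  classical
  letI tP : TopologicalSpace (∀ i, X i) := boxTopology κ X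
  have hSb : IsTopologicalBasis (boxGen κ X) := boxGen_isBasis κ X hκ
  -- choose bases of the factors
  have hBasE : ∀ i, ∃ B : Set (Set (X i)), IsTopologicalBasis B ∧ #B ≤ α := by
    intro i
    obtain ⟨B, hB1, hB2⟩ := exists_wt_basis (X i)
    exact ⟨B, hB1, hB2.trans_le (hw i)⟩
  choose Bas hBas1 hBas2 using hBasE
  -- the small basis of the box topology
  set P : Set (∀ i, Set (X i)) :=
    {U | (∀ i, U i ∈ insert Set.univ (Bas i)) ∧ #{i | U i ≠ Set.univ} < κ} with hPdef
  set Bs : Set (Set (∀ i, X i)) := (fun U : ∀ i, Set (X i) => Set.pi Set.univ U) '' P with hBsdef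
  have hmemBs : ∀ U ∈ P, Set.pi Set.univ U ∈ Bs := fun U hU => ⟨U, hU, rfl⟩
  have hPopen : ∀ U ∈ P, Set.pi Set.univ U ∈ boxGen κ X := by
    rintro U ⟨hU1, hU2⟩
    refine ⟨U, fun i => ?_, hU2, rfl⟩
    rcases mem_insert_iff.mp (hU1 i) with h | h
    · rw [h]; exact isOpen_univ
    · exact (hBas1 i).isOpen h
  have hBsb : IsTopologicalBasis Bs := by
    apply isTopologicalBasis_of_isOpen_of_nhds
    · rintro u ⟨U, hU, rfl⟩
      exact hSb.isOpen (hPopen U hU)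
    · intro x u hxu hu
      obtain ⟨s, hs, hxs, hsu⟩ := hSb.exists_subset_of_mem_open hxu hu
      obtain ⟨U, hUo, hUc, rfl⟩ := hs
      have hch : ∀ i, ∃ b : Set (X i), b ∈ insert Set.univ (Bas i) ∧ x i ∈ b ∧ b ⊆ U i ∧
          (U i = Set.univ → b = Set.univ) := by
        intro i
        by_cases h : U i = Set.univ
        · exact ⟨Set.univ, mem_insert _ _, mem_univ _, h ▸ subset_rfl, fun _ => rfl⟩
        · obtain ⟨b, hb1, hb2, hb3⟩ :=
            (hBas1 i).exists_subset_of_mem_open (hxs i (mem_univ i)) (hUo i)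
          exact ⟨b, mem_insert_of_mem _ hb1, hb2, hb3, fun hc => absurd hc h⟩
      choose V hV1 hV2 hV3 hV4 using hch
      have hVP : V ∈ P := by
        refine ⟨hV1, lt_of_le_of_lt (mk_le_mk_of_subset (fun i hi => ?_)) hUc⟩
        simp only [mem_setOf_eq] at hi ⊢
        exact fun h => hi (hV4 i h)
      exact ⟨Set.pi Set.univ V, hmemBs V hVP, fun i _ => hV2 i,
        fun y hy => hsu (fun i _ => hV3 i (hy i (mem_univ i)))⟩
  -- counting the small basis
  have hYt : #(Σ i : ι, ↥(Bas i)) ≤ α := by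
    rw [mk_sigma]
    calc Cardinal.sum (fun i => #(Bas i)) ≤ Cardinal.sum (fun _ : ι => α) :=
          sum_le_sum _ _ (fun i => hBas2 i)
    _ = #ι * α := sum_const' _ _
    _ = α := by rw [hI, mul_eq_self hα]
  have hPle : #↥P ≤ #{E : Set (Σ i : ι, ↥(Bas i)) | #E < κ} := by
    set G : (∀ i, Set (X i)) → Set (Σ i : ι, ↥(Bas i)) :=
      fun U => {p | U p.1 = (p.2 : Set (X p.1)) ∧ U p.1 ≠ Set.univ} with hGdef
    have hGcard : ∀ U ∈ P, #(G U) < κ := by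
      intro U hU
      refine lt_of_le_of_lt (mk_le_of_injective
        (f := fun p : ↥(G U) => (⟨p.1.1, p.2.2⟩ : ↥{i | U i ≠ Set.univ})) ?_) hU.2
      rintro ⟨⟨i, s⟩, hs1, hs2⟩ ⟨⟨j, t⟩, ht1, ht2⟩ h
      simp only [Subtype.mk.injEq] at h ⊢
      subst h
      exact Sigma.ext rfl (heq_of_eq (Subtype.ext (hs1.symm.trans ht1)))
    have hGinj : ∀ U ∈ P, ∀ W ∈ P, G U = G W → U = W := by
      intro U hU W hW h
      funext i
      by_cases hUi : U i = Set.univ <;> by_cases hWi : W i = Set.univ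
      · rw [hUi, hWi]
      · exfalso
        have hWB : W i ∈ Bas i := (mem_insert_iff.mp (hW.1 i)).resolve_left hWi
        have hmem : (⟨i, ⟨W i, hWB⟩⟩ : Σ i : ι, ↥(Bas i)) ∈ G W := ⟨rfl, hWi⟩
        rw [← h] at hmem
        exact hmem.2 hUi
      · exfalso
        have hUB : U i ∈ Bas i := (mem_insert_iff.mp (hU.1 i)).resolve_left hUi
        have hmem : (⟨i, ⟨U i, hUB⟩⟩ : Σ i : ι, ↥(Bas i)) ∈ G U := ⟨rfl, hUi⟩
        rw [h] at hmem
        exact hmem.2 hWi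
      · have hUB : U i ∈ Bas i := (mem_insert_iff.mp (hU.1 i)).resolve_left hUi
        have hmem : (⟨i, ⟨U i, hUB⟩⟩ : Σ i : ι, ↥(Bas i)) ∈ G U := ⟨rfl, hUi⟩
        rw [h] at hmem
        exact hmem.1.symm
    exact mk_le_of_injective
      (f := fun U : ↥P => (⟨G U.1, hGcard U.1 U.2⟩ : ↥{E : Set (Σ i : ι, ↥(Bas i)) | #E < κ}))
      (fun U W h => Subtype.ext (hGinj U.1 U.2 W.1 W.2 (congrArg Subtype.val h)))
  have hup : @wt (∀ i, X i) (boxTopology κ X) ≤ #↥P :=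
    le_trans (wt_le_basis hBsb) mk_image_le
  -- the lower bound
  have hlow : #{D : Set ι | #D < κ} ≤ @wt (∀ i, X i) (boxTopology κ X) := by
    apply le_wt
    intro B hB
    have hpair : ∀ i, ∃ (a b : X i) (V : Set (X i)), IsOpen V ∧ b ∈ V ∧ a ∉ V := by
      intro i
      obtain ⟨f, hf⟩ := h2 i
      have hop : IsOpen {x : ULift.{u} Bool | x.down = true} :=
        (isOpen_discrete {true}).preimage continuous_uliftDown
      obtain ⟨V, hV, hpre⟩ := hf.isInducing.isOpen_iff.mp hop
      refine ⟨f ⟨false⟩, f ⟨true⟩, V, hV, ?_, ?_⟩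
      · have hmem : (⟨true⟩ : ULift.{u} Bool) ∈ f ⁻¹' V := by rw [hpre]; simp
        exact hmem
      · intro hmem
        have h1 : (⟨false⟩ : ULift.{u} Bool) ∈ f ⁻¹' V := hmem
        rw [hpre] at h1
        simp at h1
    choose a b V hVo hbV haV using hpair
    have hex : ∀ D : ↥{D : Set ι | #D < κ}, ∃ tb ∈ B,
        (fun i => if i ∈ D.1 then b i else a i) ∈ tb ∧
        tb ⊆ Set.pi Set.univ (fun i => if i ∈ D.1 then V i else Set.univ) := by
      intro D
      apply hB.exists_subset_of_mem_open
      · intro i _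
        by_cases h : i ∈ D.1
        · simp only [if_pos h]; exact hbV i
        · simp only [if_neg h]; exact mem_univ _
      · refine hSb.isOpen ⟨_, fun i => ?_, ?_, rfl⟩
        · by_cases h : i ∈ D.1
          · rw [if_pos h]; exact hVo i
          · rw [if_neg h]; exact isOpen_univ
        · refine lt_of_le_of_lt (mk_le_mk_of_subset (fun i hi => ?_)) D.2
          simp only [mem_setOf_eq] at hi
          by_contra h
          rw [if_neg h] at hi
          exact hi rfl
    choose tb htb hxtb htbW using hex
    have hDsub : ∀ D D', tb D = tb D' → D'.1 ⊆ D.1 := by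
      intro D D' h i hi
      have hx : (fun i => if i ∈ D.1 then b i else a i) ∈
          Set.pi Set.univ (fun i => if i ∈ D'.1 then V i else Set.univ) :=
        htbW D' (h ▸ hxtb D)
      have h1 := hx i (mem_univ i)
      simp only [if_pos hi] at h1
      by_contra hiD
      simp only [if_neg hiD] at h1
      exact haV i h1
    have hinj : Function.Injective
        (fun D : ↥{D : Set ι | #D < κ} => (⟨tb D, htb D⟩ : ↥B)) := by
      intro D D' h
      have h' : tb D = tb D' := congrArg Subtype.val h
      exact Subtype.ext (Set.Subset.antisymm (hDsub D' D h'.symm) (hDsub D D' h'))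
    exact mk_le_of_injective hinj
  constructor
  · intro hκα
    apply le_antisymm
    · calc @wt (∀ i, X i) (boxTopology κ X) ≤ #↥P := hup
      _ ≤ #{E : Set (Σ i : ι, ↥(Bas i)) | #E < κ} := hPle
      _ ≤ α ^< κ := card_small_subsets_le hα hκ hYt
    · exact le_trans (powerlt_le_card_small_subsets hα hκ hI hκα) hlow
  · intro hκα
    apply le_antisymm
    · calc @wt (∀ i, X i) (boxTopology κ X) ≤ #↥P := hup
      _ ≤ #{E : Set (Σ i : ι, ↥(Bas i)) | #E < κ} := hPle
      _ ≤ #(Set (Σ i : ι, ↥(Bas i))) := mk_subtype_le _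
      _ = 2 ^ #(Σ i : ι, ↥(Bas i)) := mk_set
      _ ≤ 2 ^ α := power_le_power_left two_ne_zero hYt
    · have hall : ∀ D : Set ι, #D < κ := by
        intro D
        refine lt_of_le_of_lt ((mk_set_le D).trans_eq hI) (lt_of_lt_of_le ?_ hκα)
        exact Order.lt_succ α
      have h1 : (2 : Cardinal) ^ α = #(Set ι) := by rw [mk_set, hI]
      rw [h1]
      refine le_trans (mk_le_of_injective
        (f := fun D : Set ι => (⟨D, hall D⟩ : ↥{D : Set ι | #D < κ}))
        (fun D D' h => congrArg Subtype.val h)) hlow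
end

section
/- Let κ be an infinite cardinal and α a cardinal with 2 ≤ α ≤ κ. If either log(κ) < κ (where log(κ) := min{γ : 2^γ ≥ κ}) or κ is a regular strong limit cardinal, then: (a) 2^{<κ} = α^{<κ} = κ^{<κ}; and (b) d(((D(α))^κ)_κ) = 2^{<κ} = α^{<κ} = κ^{<κ}. -/
open Cardinal TopologicalSpace Set

universe u

/-- The density character of a topological space: the least cardinality of a dense subset
(finite values allowed). -/
noncomputable def dens (X : Type u) [TopologicalSpace X] : Cardinal.{u} :=
  sInf {c | ∃ D : Set X, Dense D ∧ #D = c}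

/-- `log β`: the least cardinal `γ` with `2 ^ γ ≥ β`. -/
noncomputable def clog (β : Cardinal.{u}) : Cardinal.{u} :=
  sInf {γ | β ≤ 2 ^ γ}

lemma aux_le_two_powerlt {κ : Cardinal.{u}} (hκ : ℵ₀ ≤ κ) : κ ≤ 2 ^< κ := by
  by_contra hlt
  push_neg at hlt
  exact absurd (le_powerlt 2 hlt) (not_le.2 (cantor _))

lemma aux_reg_pow {κ : Cardinal.{u}} (hreg : κ.IsRegular) (hsl : κ.IsStrongLimit)
    {μ : Cardinal.{u}} (hμ : μ < κ) : κ ^ μ ≤ κ := by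
  set K := κ.out with hKdef
  set L := μ.out with hLdef
  have hK : #K = κ := mk_out κ
  have hL : #L = μ := mk_out μ
  haveI : Infinite K := infinite_iff.2 (by rw [hK]; exact hreg.aleph0_le)
  have hpow : κ ^ μ = #(L → K) := by rw [← hK, ← hL, power_def]
  rw [hpow]
  have cover : (univ : Set (L → K)) ⊆
      ⋃ s : {s : Set K // #s < κ}, {f : L → K | ∀ l, f l ∈ s.1} := by
    intro f _
    refine mem_iUnion.2 ⟨⟨range f, mk_range_le.trans_lt (by rw [hL]; exact hμ)⟩, ?_⟩
    exact fun l => mem_range_self l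
  have h1 : #(L → K) ≤ sum fun s : {s : Set K // #s < κ} => #{f : L → K | ∀ l, f l ∈ s.1} :=
    calc #(L → K) = #(univ : Set (L → K)) := mk_univ.symm
      _ ≤ #(⋃ s : {s : Set K // #s < κ}, {f : L → K | ∀ l, f l ∈ s.1}) :=
        mk_le_mk_of_subset cover
      _ ≤ _ := mk_iUnion_le_sum_mk
  have hbound : ∀ s : {s : Set K // #s < κ}, #{f : L → K | ∀ l, f l ∈ s.1} ≤ κ := by
    intro s
    have e1 : #{f : L → K | ∀ l, f l ∈ s.1} ≤ #(L → s.1) := by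
      refine mk_le_of_injective (f := fun f l => (⟨f.1 l, f.2 l⟩ : s.1)) ?_
      intro f g hfg
      apply Subtype.ext; funext l
      exact congrArg Subtype.val (congrFun hfg l)
    have e2 : #(L → s.1) = (#s.1) ^ μ := by rw [← hL, power_def]
    have e3 : (#s.1) ^ μ ≤ 2 ^ ((#s.1) * μ) := by
      rw [power_mul]; exact power_le_power_right (cantor _).le
    have e4 : 2 ^ ((#s.1) * μ) < κ :=
      hsl.two_power_lt (mul_lt_of_lt hreg.aleph0_le s.2 hμ)
    exact e1.trans (e2.le.trans (e3.trans e4.le))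
  have hsub : #{s : Set K // #s < κ} = κ := by
    have := mk_subset_mk_lt_cof (α := K)
      (by rw [hK]; exact fun x hx => hsl.two_power_lt hx)
    rwa [hK, hreg.cof_eq] at this
  calc #(L → K) ≤ sum fun s : {s : Set K // #s < κ} => #{f : L → K | ∀ l, f l ∈ s.1} := h1
    _ ≤ sum fun _ : {s : Set K // #s < κ} => κ := sum_le_sum _ _ hbound
    _ = #{s : Set K // #s < κ} * κ := sum_const' _ _
    _ = κ * κ := by rw [hsub]
    _ = κ := mul_eq_self hreg.aleph0_le

lemma aux_subsets {κ : Cardinal.{u}} (hκ : ℵ₀ ≤ κ) {K : Type u} (hK : #K = κ) :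
    #{s : Set K // #s < κ} ≤ κ ^< κ := by
  haveI : Infinite K := infinite_iff.2 (by rw [hK]; exact hκ)
  have hκpow : κ ≤ κ ^< κ := by
    have := le_powerlt κ (c := 1) (one_lt_aleph0.trans_le hκ)
    rwa [power_one] at this
  haveI : IsWellOrder κ.ord.ToType (· < ·) := isWellOrder_lt
  have cover : {s : Set K | #s < κ} ⊆
      ⋃ i : κ.ord.ToType, {s : Set K | #s ≤ #(Iio i)} := by
    intro s hs
    have hlt : (#s).ord < Ordinal.type ((· < ·) : κ.ord.ToType → κ.ord.ToType → Prop) := by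
      rw [Ordinal.type_toType]; exact Cardinal.ord_lt_ord.2 hs
    obtain ⟨i, hi⟩ := Ordinal.typein_surj ((· < ·) : κ.ord.ToType → κ.ord.ToType → Prop) hlt
    refine mem_iUnion.2 ⟨i, ?_⟩
    have : #(Iio i) = #s := by
      have := Ordinal.card_typein (r := ((· < ·) : κ.ord.ToType → κ.ord.ToType → Prop)) i
      rw [hi, card_ord] at this
      exact this.symm
    simp only [mem_setOf_eq, this, le_refl]
  have h1 : #{s : Set K // #s < κ} ≤
      sum fun i : κ.ord.ToType => #{s : Set K | #s ≤ #(Iio i)} :=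
    calc #{s : Set K // #s < κ} = #{s : Set K | #s < κ} := rfl
      _ ≤ #(⋃ i : κ.ord.ToType, {s : Set K | #s ≤ #(Iio i)}) := mk_le_mk_of_subset cover
      _ ≤ _ := mk_iUnion_le_sum_mk
  have hbound : ∀ i : κ.ord.ToType, #{s : Set K | #s ≤ #(Iio i)} ≤ κ ^< κ := by
    intro i
    have := mk_bounded_set_le_of_infinite K (#(Iio i))
    rw [hK] at this
    exact this.trans (le_powerlt κ (mk_Iio_ord_toType i))
  calc #{s : Set K // #s < κ} ≤ _ := h1
    _ ≤ sum fun _ : κ.ord.ToType => κ ^< κ := sum_le_sum _ _ hbound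
    _ = #κ.ord.ToType * (κ ^< κ) := sum_const' _ _
    _ = κ * (κ ^< κ) := by rw [mk_ord_toType]
    _ ≤ (κ ^< κ) * (κ ^< κ) := mul_le_mul_left hκpow _
    _ = κ ^< κ := mul_eq_self (hκ.trans hκpow)

lemma box_isBasis (κ : Cardinal.{u}) (hκ : ℵ₀ ≤ κ) {ι : Type u} (X : ι → Type u)
    [∀ i, TopologicalSpace (X i)] :
    @IsTopologicalBasis (∀ i, X i) (boxTopology κ X)
      {S | ∃ U : ∀ i, Set (X i), (∀ i, IsOpen (U i)) ∧
        #{i | U i ≠ Set.univ} < κ ∧ S = Set.pi Set.univ U} := by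
  letI := boxTopology κ X
  refine ⟨?_, ?_, rfl⟩
  · rintro t₁ ⟨U, hU, hUc, rfl⟩ t₂ ⟨V, hV, hVc, rfl⟩ x hx
    refine ⟨Set.pi Set.univ (fun i => U i ∩ V i),
      ⟨fun i => U i ∩ V i, fun i => (hU i).inter (hV i), ?_, rfl⟩, ?_, ?_⟩
    · have hsub : {i | U i ∩ V i ≠ Set.univ} ⊆ {i | U i ≠ Set.univ} ∪ {i | V i ≠ Set.univ} := by
        intro i hi
        by_contra hcon
        simp only [mem_union, mem_setOf_eq, not_or, ne_eq, not_not] at hcon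
        exact hi (by rw [hcon.1, hcon.2, univ_inter])
      exact ((mk_le_mk_of_subset hsub).trans (mk_union_le _ _)).trans_lt
        (add_lt_of_lt hκ hUc hVc)
    · rw [pi_inter_distrib]; exact hx
    · rw [pi_inter_distrib]
  · apply eq_univ_of_univ_subset
    intro x _
    refine mem_sUnion.2 ⟨Set.univ, ⟨fun _ => Set.univ, fun _ => isOpen_univ, ?_, ?_⟩, trivial⟩
    · simp only [ne_eq, not_true_eq_false, setOf_false, mk_eq_zero]
      exact aleph0_pos.trans_le hκ
    · simp

lemma aux_lower {κ α : Cardinal.{u}} (hκ : ℵ₀ ≤ κ) (hα2 : 2 ≤ α)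
    {A K : Type u} [TopologicalSpace A] [DiscreteTopology A] (hA : #A = α) (hK : #K = κ)
    (D : Set (∀ _ : K, A)) (hD : @Dense _ (boxTopology κ fun _ => A) D) :
    2 ^< κ ≤ #D := by
  classical
  letI := boxTopology κ (fun _ : K => A)
  obtain ⟨a0⟩ : Nonempty A :=
    mk_ne_zero_iff.1 (by rw [hA]; exact (zero_lt_two.trans_le hα2).ne')
  rw [powerlt_le]
  intro x hx
  obtain ⟨S, hS⟩ : ∃ S : Set K, #S = x := le_mk_iff_exists_set.1 (by rw [hK]; exact hx.le)
  set U : (↥S → A) → ∀ _ : K, Set A :=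
    fun g i => if h : i ∈ S then {g ⟨i, h⟩} else Set.univ with hU
  have hopen : ∀ g, IsOpen (Set.pi Set.univ (U g)) := by
    intro g
    apply isOpen_generateFrom_of_mem
    refine ⟨U g, fun i => isOpen_discrete _, ?_, rfl⟩
    refine (mk_le_mk_of_subset ?_).trans_lt (by rw [hS]; exact hx)
    intro i hi
    by_contra hc
    exact hi (dif_neg hc)
  have hmem : ∀ g : ↥S → A,
      (fun i => if h : i ∈ S then g ⟨i, h⟩ else a0) ∈ Set.pi Set.univ (U g) := by
    intro g i _
    by_cases h : i ∈ S
    · simp [hU, h]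
    · simp [hU, h]
  have hchoice : ∀ g : ↥S → A, ∃ f : ∀ _ : K, A, f ∈ D ∧ ∀ s : ↥S, f s.1 = g s := by
    intro g
    obtain ⟨f, hf1, hf2⟩ := hD.inter_open_nonempty _ (hopen g) ⟨_, hmem g⟩
    refine ⟨f, hf2, fun s => ?_⟩
    have := hf1 s.1 trivial
    simp only [hU, s.2, dif_pos, mem_singleton_iff] at this
    rw [this]
  choose F hF1 hF2 using hchoice
  have hinj : Function.Injective fun g => (⟨F g, hF1 g⟩ : D) := by
    intro g g' hgg
    funext s
    have hFe : F g = F g' := congrArg Subtype.val hgg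
    rw [← hF2 g s, ← hF2 g' s, hFe]
  calc (2 : Cardinal) ^ x ≤ α ^ x := power_le_power_right hα2
    _ = #(↥S → A) := by rw [← hA, ← hS, power_def]
    _ ≤ #D := mk_le_of_injective hinj

theorem stmt9 (α κ : Cardinal.{u}) (hκ : ℵ₀ ≤ κ) (hα2 : 2 ≤ α) (hακ : α ≤ κ)
    (h : clog κ < κ ∨ (κ.IsRegular ∧ κ.IsStrongLimit))
    (A K : Type u) [TopologicalSpace A] [DiscreteTopology A]
    (hA : #A = α) (hK : #K = κ) :
    ((2 : Cardinal.{u}) ^< κ = α ^< κ ∧ α ^< κ = κ ^< κ) ∧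
    @dens (∀ _ : K, A) (boxTopology κ fun _ => A) = (2 : Cardinal.{u}) ^< κ := by
  classical
  have hmono : ∀ {a b : Cardinal.{u}}, a ≤ b → a ^< κ ≤ b ^< κ := fun hab =>
    powerlt_le.2 fun x hx => (power_le_power_right hab).trans (le_powerlt _ hx)
  have hk2 : κ ≤ 2 ^< κ := aux_le_two_powerlt hκ
  have hkk : κ ^< κ ≤ 2 ^< κ := by
    rcases h with hlog | ⟨hreg, hsl⟩
    · have hle : κ ≤ 2 ^ clog κ := by
        have hmem : clog κ ∈ {γ : Cardinal.{u} | κ ≤ 2 ^ γ} := csInf_mem ⟨κ, (cantor κ).le⟩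
        exact hmem
      rw [powerlt_le]
      intro x hx
      calc κ ^ x ≤ (2 ^ clog κ) ^ x := power_le_power_right hle
        _ = 2 ^ (clog κ * x) := power_mul.symm
        _ ≤ 2 ^< κ := le_powerlt 2 (mul_lt_of_lt hκ hlog hx)
    · rw [powerlt_le]
      intro x hx
      exact (aux_reg_pow hreg hsl hx).trans hk2
  have h2α : (2 : Cardinal) ^< κ ≤ α ^< κ := hmono hα2
  have hακ' : α ^< κ ≤ κ ^< κ := hmono hακ
  have e1 : (2 : Cardinal) ^< κ = α ^< κ := le_antisymm h2α (hακ'.trans hkk)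
  have e2 : α ^< κ = κ ^< κ := le_antisymm hακ' (hkk.trans h2α)
  refine ⟨⟨e1, e2⟩, ?_⟩
  letI : TopologicalSpace (∀ _ : K, A) := boxTopology κ fun _ => A
  obtain ⟨a0⟩ : Nonempty A :=
    mk_ne_zero_iff.1 (by rw [hA]; exact (zero_lt_two.trans_le hα2).ne')
  -- the dense set
  set D₀ : Set (∀ _ : K, A) := {f | #{i | f i ≠ a0} < κ} with hD₀
  have hdense : Dense D₀ := by
    rw [(box_isBasis κ hκ fun _ : K => A).dense_iff]
    rintro o ⟨U, hUo, hUc, rfl⟩ ⟨g, hg⟩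
    refine ⟨fun i => if U i = Set.univ then a0 else g i, ?_, ?_⟩
    · intro i _
      show (if U i = Set.univ then a0 else g i) ∈ U i
      by_cases hi : U i = Set.univ
      · rw [if_pos hi, hi]; trivial
      · rw [if_neg hi]; exact hg i trivial
    · refine lt_of_le_of_lt (mk_le_mk_of_subset ?_) hUc
      intro i hi
      by_contra hc
      simp only [mem_setOf_eq, not_not] at hc
      exact hi (by simp [hc])
  have hcard : #D₀ ≤ 2 ^< κ := by
    have cover : D₀ ⊆ ⋃ s : {s : Set K // #s < κ},
        {f : ∀ _ : K, A | ∀ i, i ∉ s.1 → f i = a0} := by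
      intro f hf
      refine mem_iUnion.2 ⟨⟨{i | f i ≠ a0}, hf⟩, fun i hi => ?_⟩
      simpa only [mem_setOf_eq, not_not] using hi
    have hbound : ∀ s : {s : Set K // #s < κ},
        #{f : ∀ _ : K, A | ∀ i, i ∉ s.1 → f i = a0} ≤ 2 ^< κ := by
      intro s
      have e3 : #{f : ∀ _ : K, A | ∀ i, i ∉ s.1 → f i = a0} ≤ #(↥s.1 → A) := by
        refine mk_le_of_injective (f := fun f i => f.1 i.1) ?_
        intro f g hfg
        apply Subtype.ext; funext i
        by_cases hi : i ∈ s.1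
        · exact congrFun hfg ⟨i, hi⟩
        · rw [f.2 i hi, g.2 i hi]
      have e4 : #(↥s.1 → A) = α ^ #↥s.1 := by rw [← hA, power_def]
      calc #{f : ∀ _ : K, A | ∀ i, i ∉ s.1 → f i = a0} ≤ #(↥s.1 → A) := e3
        _ = α ^ #↥s.1 := e4
        _ ≤ α ^< κ := le_powerlt α s.2
        _ = 2 ^< κ := e1.symm
    calc #D₀ ≤ #(⋃ s : {s : Set K // #s < κ},
          {f : ∀ _ : K, A | ∀ i, i ∉ s.1 → f i = a0}) := mk_le_mk_of_subset cover
      _ ≤ sum fun s : {s : Set K // #s < κ} =>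
          #{f : ∀ _ : K, A | ∀ i, i ∉ s.1 → f i = a0} := mk_iUnion_le_sum_mk
      _ ≤ sum fun _ : {s : Set K // #s < κ} => (2 : Cardinal) ^< κ := sum_le_sum _ _ hbound
      _ = #{s : Set K // #s < κ} * (2 ^< κ) := sum_const' _ _
      _ ≤ (2 ^< κ) * (2 ^< κ) :=
        mul_le_mul_left ((aux_subsets hκ hK).trans (e2 ▸ e1 ▸ le_rfl)) _
      _ = 2 ^< κ := mul_eq_self (hκ.trans hk2)
  apply le_antisymm
  · have hmem : #D₀ ∈ {c | ∃ D : Set (∀ _ : K, A), Dense D ∧ #D = c} := ⟨D₀, hdense, rfl⟩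
    exact (csInf_le' hmem).trans hcard
  · have hne : {c | ∃ D : Set (∀ _ : K, A), Dense D ∧ #D = c}.Nonempty :=
      ⟨#D₀, D₀, hdense, rfl⟩
    refine le_csInf hne ?_
    rintro c ⟨D, hD, rfl⟩
    exact aux_lower hκ hα2 hA hK D hD
end
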